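/- For skew-symmetric graded matrices over ℤ, u_+ and u_− are invariant under the move M₃ deleting a pair of complementary elements: if g₁, g₂ ∈ G − {s} are complementary and T' is T with g₁, g₂ deleted, then u_±(T') = u_±(T). -/

import Mathlib

/-- A graded matrix over an abelian group `A`: a finite set `G` with a distinguished
element `s`, a partition of `G - {s}` into positive and negative elements (recorded by
`pos`, whose value at `s` is irrelevant), and a map `b : G × G → A`. -/
structure GradedMatrix (A : Type) [AddCommGroup A] where
  G : Type
  [fin : Fintype G]
  [dec : DecidableEq G]
  s : G
  pos : G → Bool
  b : G → G → A

attribute [instance] GradedMatrix.fin GradedMatrix.dec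

variable {A : Type} [AddCommGroup A]

/-- The graded matrix `-T`: negated form, swapped partition. -/
def GradedMatrix.neg (T : GradedMatrix A) : GradedMatrix A :=
  { G := T.G, s := T.s, pos := fun g => !T.pos g, b := fun g h => -T.b g h }

/-- The form `b⁻` of the graded matrix `T⁻`. -/
def GradedMatrix.bminus (T : GradedMatrix A) : T.G → T.G → A := fun g h =>
  if g = T.s then -T.b g h
  else if h = T.s then -T.b g h
  else T.b g h - T.b g T.s - T.b T.s h

/-- The graded matrix `T⁻`, with the same partition. -/
def GradedMatrix.minus (T : GradedMatrix A) : GradedMatrix A :=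
  { T with b := T.bminus }

/-- Skew-symmetry of a graded matrix. -/
def GradedMatrix.IsSkew (T : GradedMatrix A) : Prop :=
  (∀ g h, T.b g h = -T.b h g) ∧ ∀ g, T.b g g = 0

/-- An element `g ∈ G - {s}` of type 1: `b(g, ·) ≡ 0`. -/
def GradedMatrix.Type1 (T : GradedMatrix A) (g : T.G) : Prop :=
  g ≠ T.s ∧ ∀ h, T.b g h = 0

/-- An element `g ∈ G - {s}` of type 2: `b(g, ·) = b(s, ·)`. -/
def GradedMatrix.Type2 (T : GradedMatrix A) (g : T.G) : Prop :=
  g ≠ T.s ∧ ∀ h, T.b g h = T.b T.s h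

/-- Complementary elements `g₁, g₂ ∈ G - {s}`: opposite signs and
`b(g₁,·) + b(g₂,·) = b(s,·)`. -/
def GradedMatrix.Compl (T : GradedMatrix A) (g₁ g₂ : T.G) : Prop :=
  g₁ ≠ T.s ∧ g₂ ≠ T.s ∧ T.pos g₁ ≠ T.pos g₂ ∧ ∀ h, T.b g₁ h + T.b g₂ h = T.b T.s h

/-- Deletion of an element `g₀ ≠ s` from a graded matrix. -/
def GradedMatrix.delete (T : GradedMatrix A) (g₀ : T.G) (hg : g₀ ≠ T.s) :
    GradedMatrix A :=
  { G := {g : T.G // g ≠ g₀}, s := ⟨T.s, fun h => hg h.symm⟩,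
    pos := fun g => T.pos g.1, b := fun g h => T.b g.1 h.1 }

/-- Deletion of two elements `g₁, g₂ ≠ s` from a graded matrix. -/
def GradedMatrix.delete2 (T : GradedMatrix A) (g₁ g₂ : T.G)
    (h₁ : g₁ ≠ T.s) (h₂ : g₂ ≠ T.s) : GradedMatrix A :=
  { G := {g : T.G // g ≠ g₁ ∧ g ≠ g₂},
    s := ⟨T.s, ⟨fun h => h₁ h.symm, fun h => h₂ h.symm⟩⟩,
    pos := fun g => T.pos g.1, b := fun g h => T.b g.1 h.1 }

/-- The sign `±1` of an element of a graded matrix over `ℤ`. -/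
def GradedMatrix.sgn (T : GradedMatrix ℤ) (g : T.G) : ℤ := if T.pos g then 1 else -1

/-- The polynomial `u₊(T) = ∑_{g ≠ s, b(g,s) ≠ 0, sign(b(g,s)) = sign(g)} sign(g) t^{|b(g,s)|}`. -/
noncomputable def GradedMatrix.uplus (T : GradedMatrix ℤ) : Polynomial ℤ :=
  ∑ g ∈ Finset.univ.filter
      (fun g => g ≠ T.s ∧ T.b g T.s ≠ 0 ∧ Int.sign (T.b g T.s) = T.sgn g),
    Polynomial.C (T.sgn g) * Polynomial.X ^ (T.b g T.s).natAbs

/-- The polynomial `u₋(T) = ∑_{g ≠ s, b(g,s) ≠ 0, sign(b(g,s)) = -sign(g)} sign(g) t^{|b(g,s)|}`. -/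
noncomputable def GradedMatrix.uminus (T : GradedMatrix ℤ) : Polynomial ℤ :=
  ∑ g ∈ Finset.univ.filter
      (fun g => g ≠ T.s ∧ T.b g T.s ≠ 0 ∧ Int.sign (T.b g T.s) = -T.sgn g),
    Polynomial.C (T.sgn g) * Polynomial.X ^ (T.b g T.s).natAbs


noncomputable def GradedMatrix.usum (ε : ℤ) (T : GradedMatrix ℤ) : Polynomial ℤ :=
  ∑ g ∈ Finset.univ.filter
      (fun g => g ≠ T.s ∧ T.b g T.s ≠ 0 ∧ Int.sign (T.b g T.s) = ε * T.sgn g),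
    Polynomial.C (T.sgn g) * Polynomial.X ^ (T.b g T.s).natAbs

lemma GradedMatrix.uplus_eq_usum (T : GradedMatrix ℤ) : T.uplus = T.usum 1 := by
  simp [GradedMatrix.uplus, GradedMatrix.usum]

lemma GradedMatrix.uminus_eq_usum (T : GradedMatrix ℤ) : T.uminus = T.usum (-1) := by
  simp [GradedMatrix.uminus, GradedMatrix.usum]

lemma GradedMatrix.usum_delete2 (T : GradedMatrix ℤ) (hsk : T.IsSkew) (g₁ g₂ : T.G)
    (hc : T.Compl g₁ g₂) (ε : ℤ) :
    (T.delete2 g₁ g₂ hc.1 hc.2.1).usum ε = T.usum ε := by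
  obtain ⟨h₁, h₂, hpos, hsum⟩ := hc
  have hb2 : T.b g₂ T.s = -T.b g₁ T.s := by
    have := hsum T.s
    rw [hsk.2] at this
    linarith
  have hsgn : T.sgn g₂ = -T.sgn g₁ := by
    unfold GradedMatrix.sgn
    cases hp1 : T.pos g₁ <;> cases hp2 : T.pos g₂ <;> simp_all
  have hne : g₁ ≠ g₂ := fun h => hpos (by rw [h])
  -- term function over the original set
  set F : T.G → Polynomial ℤ := fun g =>
    if g ≠ T.s ∧ T.b g T.s ≠ 0 ∧ Int.sign (T.b g T.s) = ε * T.sgn g then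
      Polynomial.C (T.sgn g) * Polynomial.X ^ (T.b g T.s).natAbs else 0 with hF
  have hT : T.usum ε = ∑ g, F g := by
    rw [GradedMatrix.usum, Finset.sum_filter]
  have hT' : (T.delete2 g₁ g₂ h₁ h₂).usum ε
      = ∑ g : {g : T.G // g ≠ g₁ ∧ g ≠ g₂}, F g.1 := by
    rw [GradedMatrix.usum, Finset.sum_filter]
    apply Finset.sum_congr rfl
    intro g _
    simp only [hF, GradedMatrix.delete2, GradedMatrix.sgn, ne_eq, Subtype.ext_iff]
    congr 1
    exact propext ⟨fun h => ⟨fun e => h.1 (Subtype.ext e), h.2⟩,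
      fun h => ⟨fun e => h.1 (congrArg Subtype.val e), h.2⟩⟩
  have hsub : ∑ g : {g : T.G // g ≠ g₁ ∧ g ≠ g₂}, F g.1
      = ∑ g ∈ Finset.univ \ {g₁, g₂}, F g := by
    rw [← Finset.sum_subtype (Finset.univ \ ({g₁, g₂} : Finset T.G)) (fun x => by simp) F]
  have hFsum : F g₁ + F g₂ = 0 := by
    have hiff : (g₂ ≠ T.s ∧ T.b g₂ T.s ≠ 0 ∧ Int.sign (T.b g₂ T.s) = ε * T.sgn g₂)
        ↔ (g₁ ≠ T.s ∧ T.b g₁ T.s ≠ 0 ∧ Int.sign (T.b g₁ T.s) = ε * T.sgn g₁) := by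
      rw [hb2, hsgn]
      simp only [Int.sign_neg, neg_ne_zero, mul_neg, neg_inj, ne_eq]
      tauto
    simp only [hF]
    by_cases hcnd : g₁ ≠ T.s ∧ T.b g₁ T.s ≠ 0 ∧ Int.sign (T.b g₁ T.s) = ε * T.sgn g₁
    · rw [if_pos hcnd, if_pos (hiff.mpr hcnd), hb2, hsgn, Int.natAbs_neg, map_neg]
      ring
    · rw [if_neg hcnd, if_neg (fun h => hcnd (hiff.mp h))]
      simp
  have hpair : ({g₁, g₂} : Finset T.G) ⊆ Finset.univ := Finset.subset_univ _
  have := Finset.sum_sdiff (f := F) hpair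
  rw [Finset.sum_pair hne, hFsum, add_zero] at this
  rw [hT, hT', hsub, this]

/-- for skew-symmetric graded matrices over `ℤ`, `u₊` and `u₋` are
invariant under the move `M₃` deleting a pair of complementary elements. -/
theorem u_delete_compl (T : GradedMatrix ℤ) (hsk : T.IsSkew) (g₁ g₂ : T.G)
    (hc : T.Compl g₁ g₂) :
    (T.delete2 g₁ g₂ hc.1 hc.2.1).uplus = T.uplus ∧
    (T.delete2 g₁ g₂ hc.1 hc.2.1).uminus = T.uminus := by
  exact ⟨by rw [GradedMatrix.uplus_eq_usum, GradedMatrix.uplus_eq_usum,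
      T.usum_delete2 hsk g₁ g₂ hc],
    by rw [GradedMatrix.uminus_eq_usum, GradedMatrix.uminus_eq_usum,
      T.usum_delete2 hsk g₁ g₂ hc]⟩
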